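/- Let R be a PID (or more generally a Dedekind domain) with field of fractions K and M a finitely generated projective R-module. Extension of scalars V ↦ V ⊗_R K defines an isomorphism from the poset of splittable (direct-summand) submodules of M to the poset of K-subspaces of M ⊗_R K, with inverse W ↦ W ∩ M. In particular the Tits complex T_R(M) (the order complex of proper nonzero direct summands of M) is GL(M)-equivariantly isomorphic to the Tits building T_K(M ⊗_R K). -/

import Mathlib

open TensorProduct

section Aux

variable {R : Type*} [CommRing R] [IsDomain R]
variable {M : Type*} [AddCommGroup M] [Module R M]

/-- Projective modules over a domain are torsion-free. -/
lemma aux_nzsd [Module.Projective R M] : NoZeroSMulDivisors R M := by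
  obtain ⟨s, hs⟩ := Module.projective_def.mp ‹Module.Projective R M›
  refine ⟨fun {r x} h => ?_⟩
  have h2 : r • s x = 0 := by rw [← map_smul, h, map_zero]
  rcases smul_eq_zero.mp h2 with h' | h'
  · exact Or.inl h'
  · right
    rw [← hs x, h', map_zero]

/-- Localizations of torsion-free modules are torsion-free. -/
lemma aux_loc_nzsd (S : Submonoid R) (hS : (0 : R) ∉ S) [NoZeroSMulDivisors R M] :
    NoZeroSMulDivisors (Localization S) (LocalizedModule S M) := by
  refine ⟨fun {c x} h => ?_⟩
  induction x using LocalizedModule.induction_on with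
  | h m t =>
    induction c using Localization.induction_on with
    | H y =>
      obtain ⟨r, s⟩ := y
      rw [LocalizedModule.mk_smul_mk] at h
      rw [show (0 : LocalizedModule S M) = LocalizedModule.mk (0 : M) 1 from
        (LocalizedModule.zero_mk 1).symm, LocalizedModule.mk_eq] at h
      obtain ⟨u, hu⟩ := h
      simp only [one_smul, smul_zero] at hu
      have hu' : ((u : R) * r) • m = 0 := by
        rw [mul_smul]
        exact hu
      rcases eq_zero_or_eq_zero_of_smul_eq_zero hu' with h' | h'
      · have hune : (u : R) ≠ 0 := fun h0 => hS (h0 ▸ u.2)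
        have hr : r = 0 := by
          rcases mul_eq_zero.mp h' with h'' | h''
          · exact absurd h'' hune
          · exact h''
        left
        rw [hr, Localization.mk_zero]
      · right
        rw [h', LocalizedModule.zero_mk]

/-- A finitely generated torsion-free module over a Dedekind domain is projective. -/
lemma aux_proj [IsDedekindDomain R] [Module.Finite R M] [NoZeroSMulDivisors R M] :
    Module.Projective R M := by
  by_cases hF : IsField R
  · letI := hF.toField
    infer_instance
  · haveI : Module.FinitePresentation R M := Module.finitePresentation_of_finite R M
    apply Module.projective_of_localization_maximal
    intro P hP
    haveI : P.IsMaximal := hP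
    haveI : P.IsPrime := hP.isPrime
    have hP0 : P ≠ ⊥ := Ring.ne_bot_of_isMaximal_of_not_isField hP hF
    haveI : IsDiscreteValuationRing (Localization.AtPrime P) :=
      IsLocalization.AtPrime.isDiscreteValuationRing_of_dedekind_domain R hP0 _
    haveI : NoZeroSMulDivisors (Localization P.primeCompl) (LocalizedModule P.primeCompl M) :=
      aux_loc_nzsd P.primeCompl (fun h => h P.zero_mem)
    infer_instance

/-- A surjection onto a projective module gives a complement of the kernel. -/
lemma aux_compl {P : Type*} [AddCommGroup P] [Module R P] [Module.Projective R P]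
    (f : M →ₗ[R] P) (hf : Function.Surjective f) : ∃ N', IsCompl (LinearMap.ker f) N' := by
  obtain ⟨s, hs⟩ := Module.projective_lifting_property f LinearMap.id hf
  have hsec : ∀ x, f (s x) = x := fun x => by
    have := LinearMap.congr_fun hs x
    simpa using this
  refine ⟨LinearMap.range s, ?_⟩
  have hproj : ∀ x : LinearMap.range s,
      ((s ∘ₗ f).codRestrict (LinearMap.range s) (fun x => ⟨f x, rfl⟩)) x = x := by
    rintro ⟨x, y, rfl⟩
    apply Subtype.ext
    exact congrArg s (hsec y)
  have key := (LinearMap.isCompl_of_proj hproj).symm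
  have hker : LinearMap.ker (s ∘ₗ f) = LinearMap.ker f := by
    ext x
    simp only [LinearMap.mem_ker, LinearMap.comp_apply]
    constructor
    · intro h
      have : f (s (f x)) = f 0 := by rw [h]
      rwa [hsec, map_zero] at this
    · intro h
      rw [h, map_zero]
  have hk : LinearMap.ker ((s ∘ₗ f).codRestrict (LinearMap.range s) (fun x => ⟨f x, rfl⟩)) =
      LinearMap.ker f := by
    rw [← hker]; exact LinearMap.ker_codRestrict _ _ _
  rwa [hk] at key

end Aux

section Main

variable (R : Type) [CommRing R] [IsDomain R] [IsDedekindDomain R]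
variable (K : Type) [Field K] [Algebra R K] [IsFractionRing R K]
variable (M : Type) [AddCommGroup M] [Module R M]

local notation "ι" => TensorProduct.mk R K M 1

lemma aux_isLocalizedModule : IsLocalizedModule (nonZeroDivisors R) (ι) := by
  rw [isLocalizedModule_iff_isBaseChange (nonZeroDivisors R) K]
  exact TensorProduct.isBaseChange R M K

lemma aux_inj [NoZeroSMulDivisors R M] : Function.Injective (ι) := by
  haveI := aux_isLocalizedModule R K M
  intro a b hab
  have h0 : (ι) (a - b) = 0 := by rw [map_sub, hab, sub_self]
  obtain ⟨s, hs⟩ := (IsLocalizedModule.eq_zero_iff (nonZeroDivisors R) (ι)).mp h0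
  rw [Submonoid.smul_def] at hs
  rcases eq_zero_or_eq_zero_of_smul_eq_zero hs with h' | h'
  · exact absurd h' (nonZeroDivisors.coe_ne_zero s)
  · exact sub_eq_zero.mp h'

lemma aux_FG (W : Submodule K (K ⊗[R] M)) :
    Submodule.span K (⇑(ι) '' ((W.restrictScalars R).comap (ι) : Set M)) = W := by
  haveI := aux_isLocalizedModule R K M
  apply le_antisymm
  · rw [Submodule.span_le]
    rintro x ⟨m, hm, rfl⟩
    exact hm
  · intro w hw
    obtain ⟨⟨m, s⟩, hms⟩ := IsLocalizedModule.surj (nonZeroDivisors R) (ι) w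
    have hs0 : algebraMap R K s ≠ 0 := fun h =>
      nonZeroDivisors.coe_ne_zero s ((IsFractionRing.to_map_eq_zero_iff (K := K)).mp h)
    have h1 : (ι) m ∈ W := by
      rw [← hms, Submonoid.smul_def]
      exact W.smul_of_tower_mem _ hw
    have h2 : w = (algebraMap R K s)⁻¹ • (ι) m := by
      rw [← hms, Submonoid.smul_def, ← algebraMap_smul K (s : R) w, inv_smul_smul₀ hs0]
    rw [h2]
    exact Submodule.smul_mem _ _ (Submodule.subset_span ⟨m, h1, rfl⟩)

lemma aux_GF [NoZeroSMulDivisors R M] {N N' : Submodule R M} (h : IsCompl N N') :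
    ((Submodule.span K (⇑(ι) '' (N : Set M))).restrictScalars R).comap (ι) = N := by
  apply le_antisymm
  · intro m hm
    -- projection onto N' along N
    set q : M →ₗ[R] M := N'.subtype ∘ₗ (N'.projectionOnto N h.symm) with hq
    have hker : Submodule.span K (⇑(ι) '' (N : Set M)) ≤
        LinearMap.ker (LinearMap.baseChange K q) := by
      rw [Submodule.span_le]
      rintro x ⟨n, hn, rfl⟩
      have hqn : q n = 0 := by
        simp [hq, Submodule.projectionOnto_apply_of_mem_right h.symm hn]
      show LinearMap.baseChange K q ((1 : K) ⊗ₜ[R] n) = 0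
      rw [LinearMap.baseChange_tmul, hqn, tmul_zero]
    have h0 : (ι) (q m) = 0 := by
      have : LinearMap.baseChange K q ((ι) m) = 0 := hker hm
      rw [show ((ι) m : K ⊗[R] M) = (1 : K) ⊗ₜ[R] m from rfl, LinearMap.baseChange_tmul] at this
      exact this
    have hq0 : q m = 0 := aux_inj R K M (show (ι) (q m) = (ι) 0 by rw [h0, map_zero])
    have : (N'.projectionOnto N h.symm) m = 0 := by
      have := congrArg (fun y => y) hq0
      simpa [hq] using hq0
    exact (Submodule.projectionOnto_apply_eq_zero_iff h.symm).mp this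
  · intro n hn
    exact Submodule.subset_span ⟨n, hn, rfl⟩

lemma aux_split [Module.Finite R M] [NoZeroSMulDivisors R M] (W : Submodule K (K ⊗[R] M)) :
    ∃ N', IsCompl ((W.restrictScalars R).comap (ι)) N' := by
  set N : Submodule R M := (W.restrictScalars R).comap (ι) with hN
  haveI : NoZeroSMulDivisors R (M ⧸ N) := by
    refine ⟨fun {r x} h => ?_⟩
    by_cases hr : r = 0
    · exact Or.inl hr
    · right
      obtain ⟨m, rfl⟩ := Submodule.Quotient.mk_surjective N x
      rw [← Submodule.Quotient.mk_smul, Submodule.Quotient.mk_eq_zero] at h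
      have har : algebraMap R K r ≠ 0 := fun h0 =>
        hr ((IsFractionRing.to_map_eq_zero_iff (K := K)).mp h0)
      have h1 : algebraMap R K r • (ι) m ∈ W := by
        rw [algebraMap_smul, ← map_smul]
        exact h
      have h2 : (ι) m ∈ W := by
        have := W.smul_mem (algebraMap R K r)⁻¹ h1
        rwa [inv_smul_smul₀ har] at this
      exact (Submodule.Quotient.mk_eq_zero N).mpr h2
  haveI : Module.Finite R (M ⧸ N) := Module.Finite.quotient R N
  haveI : Module.Projective R (M ⧸ N) := aux_proj
  have := aux_compl N.mkQ (Submodule.mkQ_surjective N)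
  rwa [Submodule.ker_mkQ] at this

end Main

/-- for a Dedekind domain `R` with fraction field `K` and a finitely
generated projective `R`-module `M`, extension of scalars `N ↦ N ⊗_R K` is an
isomorphism from the poset of splittable (direct-summand) submodules of `M` onto the
poset of `K`-subspaces of `M ⊗_R K`, with inverse `W ↦ W ∩ M`; it is moreover
`GL(M)`-equivariant (hence induces an isomorphism of Tits complexes
`𝒯_R(M) ≅ 𝒯_K(M ⊗_R K)`). -/
theorem stmt_18 (R : Type) [CommRing R] [IsDomain R] [IsDedekindDomain R]
    (K : Type) [Field K] [Algebra R K] [IsFractionRing R K]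
    (M : Type) [AddCommGroup M] [Module R M] [Module.Finite R M] [Module.Projective R M] :
    ∃ e : {N : Submodule R M // ∃ N', IsCompl N N'} ≃o Submodule K (K ⊗[R] M),
      (∀ N : {N : Submodule R M // ∃ N', IsCompl N N'},
        e N = Submodule.span K (⇑(TensorProduct.mk R K M 1) '' (N.1 : Set M))) ∧
      (∀ W : Submodule K (K ⊗[R] M),
        ((e.symm W).1 : Set M) = ⇑(TensorProduct.mk R K M 1) ⁻¹' (W : Set (K ⊗[R] M))) ∧
      (∀ (g : M ≃ₗ[R] M) (N : Submodule R M)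
        (h1 : ∃ N', IsCompl N N')
        (h2 : ∃ N', IsCompl (N.map (g : M →ₗ[R] M)) N'),
        e ⟨N.map (g : M →ₗ[R] M), h2⟩ =
          Submodule.map (LinearMap.baseChange K (g : M →ₗ[R] M)) (e ⟨N, h1⟩)) := by
  haveI : NoZeroSMulDivisors R M := aux_nzsd
  refine ⟨{
      toFun := fun N => Submodule.span K (⇑(TensorProduct.mk R K M 1) '' (N.1 : Set M))
      invFun := fun W => ⟨(W.restrictScalars R).comap (TensorProduct.mk R K M 1),
        aux_split R K M W⟩
      left_inv := fun N => Subtype.ext (aux_GF R K M N.2.choose_spec)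
      right_inv := fun W => aux_FG R K M W
      map_rel_iff' := by
        intro a b
        constructor
        · intro hle
          have ha := aux_GF R K M a.2.choose_spec
          have hb := aux_GF R K M b.2.choose_spec
          show a.1 ≤ b.1
          rw [← ha, ← hb]
          exact fun m hm => hle hm
        · intro hle
          exact Submodule.span_mono (Set.image_mono hle) }, ?_, ?_, ?_⟩
  · intro N
    rfl
  · intro W
    rfl
  · intro g N h1 h2
    show Submodule.span K (⇑(TensorProduct.mk R K M 1) '' ((N.map (g : M →ₗ[R] M)) : Set M)) =
      Submodule.map (LinearMap.baseChange K (g : M →ₗ[R] M))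
        (Submodule.span K (⇑(TensorProduct.mk R K M 1) '' (N : Set M)))
    rw [Submodule.map_span, Submodule.map_coe, Set.image_image, Set.image_image]
    congr 1
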